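/- arXiv:1608.07847 — 3 statements merged into one kernel-verified Lean document; each statement's English description precedes it below -/
import Mathlib

section
/- A rectangle is maximal if and only if it is simultaneously maximal to the left, to the right, to the bottom, and to the top; that is, each of the four one-step extensions (when it exists within the image) strictly increases the fingerprint, and a boundary touching the image border counts as maximal in that direction. -/
/-- The fingerprint (set of distinct colors) of the rectangle ⟨i₀,i₁;j₀,j₁⟩ of the
image `M`. -/
def fpF {m n σ : ℕ} (M : Fin m → Fin n → Fin σ) (i0 i1 : Fin m) (j0 j1 : Fin n) :
    Finset (Fin σ) :=
  Finset.image (fun p : Fin m × Fin n => M p.1 p.2)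
    (Finset.univ.filter fun p : Fin m × Fin n =>
      i0 ≤ p.1 ∧ p.1 ≤ i1 ∧ j0 ≤ p.2 ∧ p.2 ≤ j1)

/-- A rectangle is maximal if no rectangle properly containing it has the same
fingerprint. -/
def MaximalRect {m n σ : ℕ} (M : Fin m → Fin n → Fin σ)
    (i0 i1 : Fin m) (j0 j1 : Fin n) : Prop :=
  i0 ≤ i1 ∧ j0 ≤ j1 ∧
  ∀ i0' i1' : Fin m, ∀ j0' j1' : Fin n,
    i0' ≤ i0 → i1 ≤ i1' → j0' ≤ j0 → j1 ≤ j1' →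
    (i0', i1', j0', j1') ≠ (i0, i1, j0, j1) →
    fpF M i0' i1' j0' j1' ≠ fpF M i0 i1 j0 j1

lemma fpF_mono {m n σ : ℕ} (M : Fin m → Fin n → Fin σ)
    {i0 i1 i0' i1' : Fin m} {j0 j1 j0' j1' : Fin n}
    (h1 : i0' ≤ i0) (h2 : i1 ≤ i1') (h3 : j0' ≤ j0) (h4 : j1 ≤ j1') :
    fpF M i0 i1 j0 j1 ⊆ fpF M i0' i1' j0' j1' := by
  apply Finset.image_subset_image
  intro p hp
  simp only [Finset.mem_filter, Finset.mem_univ, true_and] at *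
  exact ⟨le_trans h1 hp.1, le_trans hp.2.1 h2, le_trans h3 hp.2.2.1, le_trans hp.2.2.2 h4⟩

/-- A rectangle is maximal iff it is maximal to the left, right, bottom and top:
each one-step extension (when it exists within the image) changes the fingerprint,
and a boundary touching the image border counts as maximal in that direction. -/
theorem statement3 (m n σ : ℕ) (M : Fin m → Fin n → Fin σ)
    (i0 i1 : Fin m) (j0 j1 : Fin n) (hi : i0 ≤ i1) (hj : j0 ≤ j1) :
    MaximalRect M i0 i1 j0 j1 ↔
      ((j0.val = 0 ∨ ∃ j0' : Fin n, j0'.val + 1 = j0.val ∧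
          fpF M i0 i1 j0' j1 ≠ fpF M i0 i1 j0 j1) ∧
       (j1.val = n - 1 ∨ ∃ j1' : Fin n, j1.val + 1 = j1'.val ∧
          fpF M i0 i1 j0 j1' ≠ fpF M i0 i1 j0 j1) ∧
       (i0.val = 0 ∨ ∃ i0' : Fin m, i0'.val + 1 = i0.val ∧
          fpF M i0' i1 j0 j1 ≠ fpF M i0 i1 j0 j1) ∧
       (i1.val = m - 1 ∨ ∃ i1' : Fin m, i1.val + 1 = i1'.val ∧
          fpF M i0 i1' j0 j1 ≠ fpF M i0 i1 j0 j1)) := by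
  constructor
  · rintro ⟨-, -, hmax⟩
    refine ⟨?_, ?_, ?_, ?_⟩
    · by_cases h0 : j0.val = 0
      · exact Or.inl h0
      · refine Or.inr ⟨⟨j0.val - 1, lt_trans (Nat.pred_lt h0) j0.isLt⟩,
          Nat.succ_pred_eq_of_pos (Nat.pos_of_ne_zero h0), ?_⟩
        apply hmax i0 i1 _ j1 le_rfl le_rfl (by simp [Fin.le_def]) le_rfl
        simp only [ne_eq, Prod.mk.injEq, Fin.ext_iff, not_and]
        intro _ _ h; omega
    · by_cases h0 : j1.val = n - 1
      · exact Or.inl h0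
      · have hlt : j1.val + 1 < n := by have := j1.isLt; omega
        refine Or.inr ⟨⟨j1.val + 1, hlt⟩, rfl, ?_⟩
        apply hmax i0 i1 j0 _ le_rfl le_rfl le_rfl (by simp [Fin.le_def])
        simp only [ne_eq, Prod.mk.injEq, Fin.ext_iff, not_and]
        intro _ _ _; omega
    · by_cases h0 : i0.val = 0
      · exact Or.inl h0
      · refine Or.inr ⟨⟨i0.val - 1, lt_trans (Nat.pred_lt h0) i0.isLt⟩,
          Nat.succ_pred_eq_of_pos (Nat.pos_of_ne_zero h0), ?_⟩
        apply hmax _ i1 j0 j1 (by simp [Fin.le_def]) le_rfl le_rfl le_rfl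
        simp only [ne_eq, Prod.mk.injEq, Fin.ext_iff, not_and]
        intro h; omega
    · by_cases h0 : i1.val = m - 1
      · exact Or.inl h0
      · have hlt : i1.val + 1 < m := by have := i1.isLt; omega
        refine Or.inr ⟨⟨i1.val + 1, hlt⟩, rfl, ?_⟩
        apply hmax i0 _ j0 j1 le_rfl (by simp [Fin.le_def]) le_rfl le_rfl
        simp only [ne_eq, Prod.mk.injEq, Fin.ext_iff, not_and]
        intro _ h; omega
  · rintro ⟨hL, hR, hB, hT⟩
    refine ⟨hi, hj, ?_⟩
    intro i0' i1' j0' j1' h1 h2 h3 h4 hne heq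
    simp only [ne_eq, Prod.mk.injEq, not_and] at hne
    by_cases e1 : i0' = i0
    · by_cases e2 : i1' = i1
      · by_cases e3 : j0' = j0
        · by_cases e4 : j1' = j1
          · exact hne e1 e2 e3 e4
          · -- j1 < j1'
            have hlt : j1.val < j1'.val := lt_of_le_of_ne h4 (fun h => e4 (Fin.ext h.symm))
            rcases hR with h0 | ⟨j1'', hj1'', hfp⟩
            · have := j1'.isLt; omega
            · apply hfp
              apply Finset.Subset.antisymm
              · exact (fpF_mono M h1 h2 h3 (Fin.le_def.mpr (by omega))).trans heq.le
              · exact fpF_mono M le_rfl le_rfl le_rfl (Fin.le_def.mpr (by omega))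
        · have hlt : j0'.val < j0.val := lt_of_le_of_ne h3 (fun h => e3 (Fin.ext h))
          rcases hL with h0 | ⟨j0'', hj0'', hfp⟩
          · omega
          · apply hfp
            apply Finset.Subset.antisymm
            · exact (fpF_mono M h1 h2 (Fin.le_def.mpr (by omega)) h4).trans heq.le
            · exact fpF_mono M le_rfl le_rfl (Fin.le_def.mpr (by omega)) le_rfl
      · have hlt : i1.val < i1'.val := lt_of_le_of_ne h2 (fun h => e2 (Fin.ext h.symm))
        rcases hT with h0 | ⟨i1'', hi1'', hfp⟩
        · have := i1'.isLt; omega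
        · apply hfp
          apply Finset.Subset.antisymm
          · exact (fpF_mono M h1 (Fin.le_def.mpr (by omega)) h3 h4).trans heq.le
          · exact fpF_mono M le_rfl (Fin.le_def.mpr (by omega)) le_rfl le_rfl
    · have hlt : i0'.val < i0.val := lt_of_le_of_ne h1 (fun h => e1 (Fin.ext h))
      rcases hB with h0 | ⟨i0'', hi0'', hfp⟩
      · omega
      · apply hfp
        apply Finset.Subset.antisymm
        · exact (fpF_mono M (Fin.le_def.mpr (by omega)) h2 h3 h4).trans heq.le
        · exact fpF_mono M (Fin.le_def.mpr (by omega)) le_rfl le_rfl le_rfl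
end

section
/- Fix a bottom row i₀, a top row i₁ and a left column j₀ of an image. If r = ⟨i₀,i₁;j₀,j₁⟩ and r' = ⟨i₀,i₁;j₀,j₁'⟩ are two distinct rectangles with the same rows and left column that are both maximal, then their fingerprints are distinct. -/
/-- Two distinct maximal rectangles with the same rows and the same left column
have distinct fingerprints. -/
theorem statement4 (m n σ : ℕ) (M : Fin m → Fin n → Fin σ)
    (i0 i1 : Fin m) (j0 j1 j1' : Fin n)
    (h : MaximalRect M i0 i1 j0 j1) (h' : MaximalRect M i0 i1 j0 j1')
    (hne : j1 ≠ j1') :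
    fpF M i0 i1 j0 j1 ≠ fpF M i0 i1 j0 j1' := by
  rcases lt_or_gt_of_ne hne with hlt | hgt
  · exact fun heq =>
      h.2.2 i0 i1 j0 j1' le_rfl le_rfl le_rfl hlt.le
        (by simp [Prod.ext_iff]; exact hne.symm) heq.symm
  · exact fun heq =>
      h'.2.2 i0 i1 j0 j1 le_rfl le_rfl le_rfl hgt.le
        (by simp [Prod.ext_iff]; exact hne) heq
end

section
/- For an m×n image with colors in [1,σ], a rectangle ⟨i₀,i₁;j₀,j−1⟩ (with the same fixed rows and right column j−1) is maximal to the bottom if and only if there exists a color c occurring in row i₀−1 within columns [1, j−1] whose rightmost occurrence column p in row i₀−1 satisfies l(c) < j₀ ≤ p, where l(c) is the rightmost column of ⟨i₀,i₁;1,j−1⟩ containing an occurrence of c (l(c) = 0 if c does not occur there). -/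
lemma mem_fpF_iff {m n σ : ℕ} (M : Fin m → Fin n → Fin σ) (i0 i1 : Fin m) (j0 j1 : Fin n)
    (c : Fin σ) : c ∈ fpF M i0 i1 j0 j1 ↔
      ∃ i : Fin m, ∃ j : Fin n, i0 ≤ i ∧ i ≤ i1 ∧ j0 ≤ j ∧ j ≤ j1 ∧ M i j = c := by
  simp only [fpF, Finset.mem_image, Finset.mem_filter, Finset.mem_univ, true_and, Prod.exists]
  constructor
  · rintro ⟨i, j, ⟨h1, h2, h3, h4⟩, h5⟩
    exact ⟨i, j, h1, h2, h3, h4, h5⟩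
  · rintro ⟨i, j, h1, h2, h3, h4, h5⟩
    exact ⟨i, j, ⟨h1, h2, h3, h4⟩, h5⟩

/-- A rectangle ⟨i₀,i₁;j₀,je⟩ is maximal to the bottom iff there is a color c
occurring in the row ib just below i₀ within columns [1,je] whose rightmost
occurrence column p in row ib satisfies l(c) < j₀ ≤ p, where l(c) is the
rightmost column of ⟨i₀,i₁;1,je⟩ containing c (so l(c) < j₀ means c has no
occurrence in ⟨i₀,i₁;j₀,je⟩). -/
theorem statement12 (m n σ : ℕ) (M : Fin m → Fin n → Fin σ)
    (i0 i1 ib : Fin m) (j0 je : Fin n)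
    (hb : ib.val + 1 = i0.val) (hi : i0 ≤ i1) (hj : j0 ≤ je) :
    fpF M ib i1 j0 je ≠ fpF M i0 i1 j0 je ↔
      ∃ c : Fin σ, ∃ p : Fin n,
        j0 ≤ p ∧ p ≤ je ∧ M ib p = c ∧
        (∀ q : Fin n, q ≤ je → M ib q = c → q ≤ p) ∧
        (∀ q : Fin n, j0 ≤ q → q ≤ je →
          ∀ i : Fin m, i0 ≤ i → i ≤ i1 → M i q ≠ c) := by
  have hbi : (ib : Fin m) ≤ ib := le_refl _
  have hbl : ib ≤ i1 := by
    have := hi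
    simp only [Fin.le_def] at *
    omega
  constructor
  · intro hne
    have hsub : fpF M i0 i1 j0 je ⊆ fpF M ib i1 j0 je := by
      intro c hc
      rw [mem_fpF_iff] at hc ⊢
      obtain ⟨i, j, h1, h2, h3, h4, h5⟩ := hc
      refine ⟨i, j, ?_, h2, h3, h4, h5⟩
      simp only [Fin.le_def] at *
      omega
    have hss : fpF M i0 i1 j0 je ⊂ fpF M ib i1 j0 je :=
      hsub.ssubset_of_ne (Ne.symm hne)
    obtain ⟨c, hcmem, hcnot⟩ := Finset.exists_of_ssubset hss
    rw [mem_fpF_iff] at hcmem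
    obtain ⟨i, q, h1, h2, h3, h4, h5⟩ := hcmem
    have hieq : i = ib := by
      by_contra hne2
      apply hcnot
      rw [mem_fpF_iff]
      refine ⟨i, q, ?_, h2, h3, h4, h5⟩
      simp only [Fin.le_def, Fin.ext_iff] at *
      omega
    subst hieq
    set S := Finset.univ.filter (fun q' : Fin n => q' ≤ je ∧ M i q' = c) with hS
    have hqS : q ∈ S := by
      simp only [hS, Finset.mem_filter, Finset.mem_univ, true_and]
      exact ⟨h4, h5⟩
    have hSne : S.Nonempty := ⟨q, hqS⟩
    set p := S.max' hSne with hp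
    have hpS : p ∈ S := S.max'_mem hSne
    simp only [hS, Finset.mem_filter, Finset.mem_univ, true_and] at hpS
    refine ⟨c, p, ?_, hpS.1, hpS.2, ?_, ?_⟩
    · exact le_trans h3 (S.le_max' q hqS)
    · intro q' hq1 hq2
      refine S.le_max' q' ?_
      simp only [hS, Finset.mem_filter, Finset.mem_univ, true_and]
      exact ⟨hq1, hq2⟩
    · intro q' hq1 hq2 i' hi1 hi2 hMe
      apply hcnot
      rw [mem_fpF_iff]
      exact ⟨i', q', hi1, hi2, hq1, hq2, hMe⟩
  · rintro ⟨c, p, h1, h2, h3, h4, h5⟩ heq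
    have hc1 : c ∈ fpF M ib i1 j0 je := by
      rw [mem_fpF_iff]
      exact ⟨ib, p, le_refl _, hbl, h1, h2, h3⟩
    rw [heq, mem_fpF_iff] at hc1
    obtain ⟨i, q, g1, g2, g3, g4, g5⟩ := hc1
    exact h5 q g3 g4 i g1 g2 g5
end
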